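/- There exist p ∈ [1, ∞), m ≥ 1, and b ∈ (0,1) with the following property. Let B be the Bernoulli distribution on ℝ with B({1}) = b and B({0}) = 1 − b, and for μ ∈ [0,1] let B_μ be the Bernoulli distribution with B_μ({1}) = μ. Let Ŷ_m = (1/m) ∑_{k=1}^m δ_{Y_k} be the empirical measure of m i.i.d. samples Y_1, …, Y_m from B. Then the set of minimizers over μ ∈ [0,1] of μ ↦ E[W_p(Ŷ_m, B_μ)] is different from the set of minimizers over μ ∈ [0,1] of μ ↦ W_p(B, B_μ) (the latter being {b}). -/

import Mathlib

open MeasureTheory Set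
open scoped ENNReal

/-- The CDF of a measure on ℝ: `F(y) = μ((-∞, y])`. -/
noncomputable def cdfFn (μ : Measure ℝ) (y : ℝ) : ℝ := (μ (Iic y)).toReal

/-- The quantile function (generalized inverse CDF): `F⁻¹(ω) = inf {y | ω ≤ F(y)}`. -/
noncomputable def quantileFn (μ : Measure ℝ) (ω : ℝ) : ℝ := sInf {y : ℝ | ω ≤ cdfFn μ y}

/-- The empirical measure of samples `Y : Fin m → ℝ`, i.e. `(1/m) ∑ₖ δ_{Yₖ}`. -/
noncomputable def empiricalMeasure {m : ℕ} (Y : Fin m → ℝ) : Measure ℝ :=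
  (m : ℝ≥0∞)⁻¹ • ∑ k : Fin m, Measure.dirac (Y k)

/-- The p-Wasserstein distance `W_p(μ, ν) = (∫_0^1 |F_μ⁻¹(ω) - F_ν⁻¹(ω)|^p dω)^{1/p}`. -/
noncomputable def Wp (p : ℝ) (μ ν : Measure ℝ) : ℝ :=
  (∫ ω in (0:ℝ)..1, |quantileFn μ ω - quantileFn ν ω| ^ p) ^ (1 / p)

/-- The Bernoulli distribution on ℝ with mass `μ` at `1` and `1 - μ` at `0`. -/
noncomputable def bern (μ : ℝ) : Measure ℝ :=
  ENNReal.ofReal (1 - μ) • Measure.dirac 0 + ENNReal.ofReal μ • Measure.dirac 1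

set_option linter.unnecessarySeqFocus false

lemma cdf_bern {μ : ℝ} (h0 : 0 ≤ μ) (h1 : μ ≤ 1) (y : ℝ) :
    cdfFn (bern μ) y = if y < 0 then 0 else if y < 1 then 1 - μ else 1 := by
  have h1' : (0:ℝ) ≤ 1 - μ := by linarith
  simp only [cdfFn, bern, Measure.add_apply, Measure.smul_apply, smul_eq_mul,
    Measure.dirac_apply' _ measurableSet_Iic]
  by_cases hy0 : y < 0
  · simp [hy0, indicator, mem_Iic, not_le.mpr hy0, (by linarith : ¬ (1:ℝ) ≤ y)]
  · by_cases hy1 : y < 1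
    · simp [hy0, hy1, indicator, mem_Iic, not_le.mp, le_of_not_gt hy0, not_le.mpr hy1,
        ENNReal.toReal_ofReal h1']
    · simp only [hy0, hy1, if_false, indicator, mem_Iic, le_of_not_gt hy0, le_of_not_gt hy1,
        if_true, Pi.one_apply, mul_one]
      rw [← ENNReal.ofReal_add h1' h0, ENNReal.toReal_ofReal (by linarith)]
      ring
lemma cdf_dirac (x y : ℝ) : cdfFn (Measure.dirac x) y = if x ≤ y then 1 else 0 := by
  simp only [cdfFn, Measure.dirac_apply' _ measurableSet_Iic, indicator, mem_Iic]
  split <;> simp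
lemma quantile_dirac (x : ℝ) {ω : ℝ} (h0 : 0 < ω) (h1 : ω ≤ 1) :
    quantileFn (Measure.dirac x) ω = x := by
  have : {y : ℝ | ω ≤ cdfFn (Measure.dirac x) y} = Ici x := by
    ext y
    simp only [mem_setOf_eq, cdf_dirac, mem_Ici]
    split <;> rename_i h
    · simpa using ⟨fun _ => h, fun _ => h1⟩
    · simp [not_le.mpr h0, le_of_not_gt, h]
  rw [quantileFn, this, csInf_Ici]
lemma quantile_bern {μ : ℝ} (hm0 : 0 ≤ μ) (hm1 : μ ≤ 1) {ω : ℝ} (h0 : 0 < ω) (h1 : ω ≤ 1) :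
    quantileFn (bern μ) ω = if ω ≤ 1 - μ then 0 else 1 := by
  rw [quantileFn]
  by_cases hc : ω ≤ 1 - μ
  · have : {y : ℝ | ω ≤ cdfFn (bern μ) y} = Ici (0:ℝ) := by
      ext y
      simp only [mem_setOf_eq, cdf_bern hm0 hm1, mem_Ici]
      constructor
      · intro h
        by_contra hy
        rw [if_pos (not_le.mp hy)] at h
        linarith
      · intro hy
        rw [if_neg (not_lt.mpr hy)]
        split
        · exact hc
        · exact h1
    rw [this, csInf_Ici, if_pos hc]
  · have : {y : ℝ | ω ≤ cdfFn (bern μ) y} = Ici (1:ℝ) := by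
      ext y
      simp only [mem_setOf_eq, cdf_bern hm0 hm1, mem_Ici]
      constructor
      · intro h
        by_contra hy
        rcases lt_or_ge y 0 with hy0 | hy0
        · rw [if_pos hy0] at h; linarith
        · rw [if_neg (not_lt.mpr hy0), if_pos (not_le.mp hy)] at h; exact hc h
      · intro hy
        rw [if_neg (by linarith : ¬ y < 0), if_neg (by linarith : ¬ y < 1)]
        exact h1
    rw [this, csInf_Ici, if_neg hc]
lemma int_pc3 (s t c1 c2 c3 : ℝ) (h0 : 0 ≤ s) (hst : s ≤ t) (ht : t ≤ 1) :
    ∫ ω in (0:ℝ)..1, (if ω ≤ s then c1 else if ω ≤ t then c2 else c3)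
      = s * c1 + (t - s) * c2 + (1 - t) * c3 := by
  set f : ℝ → ℝ := fun ω => if ω ≤ s then c1 else if ω ≤ t then c2 else c3 with hf
  have e1 : ∫ ω in (0:ℝ)..s, f ω = s * c1 := by
    rw [intervalIntegral.integral_congr (g := fun _ => c1) ?_]
    · simp [smul_eq_mul, mul_comm]
    · intro x hx
      rw [uIcc_of_le h0] at hx
      simp [hf, hx.2]
  have e2 : ∫ ω in s..t, f ω = (t - s) * c2 := by
    rw [intervalIntegral.integral_of_le hst,
      setIntegral_congr_fun measurableSet_Ioc (g := fun _ => c2) ?_]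
    · simp [Real.volume_Ioc, ENNReal.toReal_ofReal (by linarith : (0:ℝ) ≤ t - s), mul_comm, hst]
    · intro x hx
      simp [hf, not_le.mpr hx.1, hx.2]
  have e3 : ∫ ω in t..1, f ω = (1 - t) * c3 := by
    rw [intervalIntegral.integral_of_le ht,
      setIntegral_congr_fun measurableSet_Ioc (g := fun _ => c3) ?_]
    · simp [Real.volume_Ioc, ENNReal.toReal_ofReal (by linarith : (0:ℝ) ≤ 1 - t), mul_comm, ht]
    · intro x hx
      simp [hf, not_le.mpr hx.1, not_le.mpr (lt_of_le_of_lt hst hx.1)]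
  have i1 : IntervalIntegrable f volume 0 s := by
    apply IntervalIntegrable.congr_ae (f := fun _ => c1) intervalIntegrable_const
    rw [Filter.EventuallyEq, ae_restrict_iff' measurableSet_uIoc]
    refine Filter.Eventually.of_forall fun x hx => ?_
    rw [uIoc_of_le h0] at hx
    simp [hf, hx.2]
  have i2 : IntervalIntegrable f volume s t := by
    apply IntervalIntegrable.congr_ae (f := fun _ => c2) intervalIntegrable_const
    rw [Filter.EventuallyEq, ae_restrict_iff' measurableSet_uIoc]
    refine Filter.Eventually.of_forall fun x hx => ?_
    rw [uIoc_of_le hst] at hx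
    simp [hf, not_le.mpr hx.1, hx.2]
  have i3 : IntervalIntegrable f volume t 1 := by
    apply IntervalIntegrable.congr_ae (f := fun _ => c3) intervalIntegrable_const
    rw [Filter.EventuallyEq, ae_restrict_iff' measurableSet_uIoc]
    refine Filter.Eventually.of_forall fun x hx => ?_
    rw [uIoc_of_le ht] at hx
    simp [hf, not_le.mpr hx.1, not_le.mpr (lt_of_le_of_lt hst hx.1)]
  rw [← intervalIntegral.integral_add_adjacent_intervals (i1.trans i2) i3,
    ← intervalIntegral.integral_add_adjacent_intervals i1 i2, e1, e2, e3]
lemma Wp_one (μ ν : Measure ℝ) :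
    Wp 1 μ ν = ∫ ω in (0:ℝ)..1, |quantileFn μ ω - quantileFn ν ω| := by
  simp [Wp]
lemma Wp_dirac_bern (x : ℝ) {μ : ℝ} (hm0 : 0 ≤ μ) (hm1 : μ ≤ 1) :
    Wp 1 (Measure.dirac x) (bern μ) = (1 - μ) * |x| + μ * |x - 1| := by
  rw [Wp_one]
  rw [intervalIntegral.integral_congr_ae
    (g := fun ω => if ω ≤ 1 - μ then |x| else if ω ≤ 1 - μ then |x| else |x - 1|) ?_]
  · rw [int_pc3 _ _ _ _ _ (by linarith) le_rfl (by linarith)]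
    ring
  · refine Filter.Eventually.of_forall fun ω hω => ?_
    rw [uIoc_of_le (by norm_num : (0:ℝ) ≤ 1)] at hω
    rw [quantile_dirac x hω.1 hω.2, quantile_bern hm0 hm1 hω.1 hω.2]
    by_cases h : ω ≤ 1 - μ <;> simp [h]
lemma Wp_symm (p : ℝ) (μ ν : Measure ℝ) : Wp p μ ν = Wp p ν μ := by
  unfold Wp
  congr 1
  apply intervalIntegral.integral_congr
  intro ω _
  simp only [abs_sub_comm]
lemma Wp_bern_bern_le {b μ : ℝ} (hb0 : 0 ≤ b) (hm1 : μ ≤ 1) (hbm : b ≤ μ) :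
    Wp 1 (bern b) (bern μ) = μ - b := by
  have hb1 : b ≤ 1 := hbm.trans hm1
  have hm0 : 0 ≤ μ := hb0.trans hbm
  rw [Wp_one]
  rw [intervalIntegral.integral_congr_ae
    (g := fun ω => if ω ≤ 1 - μ then 0 else if ω ≤ 1 - b then 1 else 0) ?_]
  · rw [int_pc3 _ _ _ _ _ (by linarith) (by linarith) (by linarith)]
    ring
  · refine Filter.Eventually.of_forall fun ω hω => ?_
    rw [uIoc_of_le (by norm_num : (0:ℝ) ≤ 1)] at hω
    rw [quantile_bern hb0 hb1 hω.1 hω.2, quantile_bern hm0 hm1 hω.1 hω.2]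
    by_cases h : ω ≤ 1 - μ <;> by_cases h' : ω ≤ 1 - b <;>
      simp [h, h'] <;> linarith
lemma Wp_bern_bern {b μ : ℝ} (hb0 : 0 ≤ b) (hb1 : b ≤ 1) (hm0 : 0 ≤ μ) (hm1 : μ ≤ 1) :
    Wp 1 (bern b) (bern μ) = |b - μ| := by
  rcases le_total b μ with h | h
  · rw [Wp_bern_bern_le hb0 hm1 h, abs_of_nonpos (by linarith), neg_sub]
  · rw [Wp_symm, Wp_bern_bern_le hm0 hb1 h, abs_of_nonneg (by linarith)]
lemma integral_bern {μ : ℝ} (h0 : 0 ≤ μ) (h1 : μ ≤ 1) (f : ℝ → ℝ) :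
    ∫ x, f x ∂(bern μ) = (1 - μ) * f 0 + μ * f 1 := by
  have hi : ∀ (a : ℝ) (c : ℝ≥0∞), c ≠ ⊤ → Integrable f (c • Measure.dirac a) := by
    intro a c hc
    exact (((integrable_const (f a)).congr (ae_eq_dirac f).symm).smul_measure hc)
  rw [bern, integral_add_measure (hi 0 _ ENNReal.ofReal_ne_top) (hi 1 _ ENNReal.ofReal_ne_top),
    integral_smul_measure, integral_smul_measure, integral_dirac, integral_dirac,
    ENNReal.toReal_ofReal (by linarith), ENNReal.toReal_ofReal h0]
  simp
lemma integral_pi_one (ν : Measure ℝ) [IsProbabilityMeasure ν] (g : ℝ → ℝ) :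
    ∫ Y : Fin 1 → ℝ, g (Y 0) ∂(Measure.pi fun _ : Fin 1 => ν) = ∫ x, g x ∂ν := by
  have h := (measurePreserving_funUnique ν (Fin 1)).integral_comp' (f := MeasurableEquiv.funUnique (Fin 1) ℝ) g
  rw [← h]
  rfl
lemma emp_one (Y : Fin 1 → ℝ) : empiricalMeasure Y = Measure.dirac (Y 0) := by
  simp [empiricalMeasure]
instance bern_prob {b : ℝ} : IsFiniteMeasure (bern b) := by
  constructor
  simp [bern]
lemma bern_prob' {b : ℝ} (h0 : 0 ≤ b) (h1 : b ≤ 1) : IsProbabilityMeasure (bern b) := by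
  constructor
  simp [bern, ← ENNReal.ofReal_add (by linarith : (0:ℝ) ≤ 1 - b) h0]
lemma expected_loss {b μ : ℝ} (hb0 : 0 ≤ b) (hb1 : b ≤ 1) (hm0 : 0 ≤ μ) (hm1 : μ ≤ 1) :
    (∫ Y, Wp 1 (empiricalMeasure Y) (bern μ) ∂(Measure.pi fun _ : Fin 1 => bern b))
      = (1 - b) * μ + b * (1 - μ) := by
  have hP := bern_prob' hb0 hb1
  have step1 : (∫ Y, Wp 1 (empiricalMeasure Y) (bern μ) ∂(Measure.pi fun _ : Fin 1 => bern b))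
      = ∫ Y : Fin 1 → ℝ, ((1 - μ) * |Y 0| + μ * |Y 0 - 1|) ∂(Measure.pi fun _ : Fin 1 => bern b) := by
    refine integral_congr_ae (Filter.Eventually.of_forall fun Y => ?_)
    simp only [emp_one, Wp_dirac_bern _ hm0 hm1]
  rw [step1, integral_pi_one (bern b) (fun x => (1 - μ) * |x| + μ * |x - 1|),
    integral_bern hb0 hb1]
  have e0 : |(0:ℝ)| = 0 := abs_zero
  have e1 : |(0:ℝ) - 1| = 1 := by norm_num
  have e2 : |(1:ℝ)| = 1 := by norm_num
  have e3 : |(1:ℝ) - 1| = 0 := by norm_num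
  rw [e0, e1, e2, e3]
  ring

/-- there are `p ∈ [1, ∞)`, `m ≥ 1` and `b ∈ (0,1)` such that the minimizers over
`μ ∈ [0,1]` of the expected empirical Wasserstein loss `μ ↦ E[W_p(Ŷ_m, B_μ)]` (samples drawn
i.i.d. from `B = B_b`) differ from the minimizers of the true loss `μ ↦ W_p(B, B_μ)`, the latter
being `{b}`. -/
theorem bernoulli_biased_wasserstein :
    ∃ (p : ℝ) (m : ℕ) (b : ℝ), 1 ≤ p ∧ 1 ≤ m ∧ b ∈ Set.Ioo (0 : ℝ) 1 ∧
      {μ : ℝ | μ ∈ Set.Icc (0:ℝ) 1 ∧ ∀ ν ∈ Set.Icc (0:ℝ) 1,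
          (∫ Y, Wp p (empiricalMeasure Y) (bern μ) ∂(Measure.pi fun _ : Fin m => bern b))
            ≤ ∫ Y, Wp p (empiricalMeasure Y) (bern ν) ∂(Measure.pi fun _ : Fin m => bern b)} ≠
      {μ : ℝ | μ ∈ Set.Icc (0:ℝ) 1 ∧ ∀ ν ∈ Set.Icc (0:ℝ) 1,
          Wp p (bern b) (bern μ) ≤ Wp p (bern b) (bern ν)} ∧
      {μ : ℝ | μ ∈ Set.Icc (0:ℝ) 1 ∧ ∀ ν ∈ Set.Icc (0:ℝ) 1,
          Wp p (bern b) (bern μ) ≤ Wp p (bern b) (bern ν)} = {b} := by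
  refine ⟨1, 1, 1/4, le_rfl, le_rfl, by norm_num, ?_⟩
  have hb0 : (0:ℝ) ≤ 1/4 := by norm_num
  have hb1 : (1/4:ℝ) ≤ 1 := by norm_num
  have htrue : {μ : ℝ | μ ∈ Set.Icc (0:ℝ) 1 ∧ ∀ ν ∈ Set.Icc (0:ℝ) 1,
      Wp 1 (bern (1/4)) (bern μ) ≤ Wp 1 (bern (1/4)) (bern ν)} = {(1/4 : ℝ)} := by
    ext μ
    simp only [mem_setOf_eq, mem_singleton_iff]
    constructor
    · rintro ⟨hμ, h⟩
      have h4 := h (1/4) ⟨hb0, hb1⟩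
      rw [Wp_bern_bern hb0 hb1 hμ.1 hμ.2, Wp_bern_bern hb0 hb1 hb0 hb1] at h4
      simp only [sub_self, abs_zero] at h4
      have := abs_eq_zero.mp (le_antisymm h4 (abs_nonneg _))
      linarith
    · rintro rfl
      refine ⟨⟨hb0, hb1⟩, fun ν hν => ?_⟩
      rw [Wp_bern_bern hb0 hb1 hb0 hb1, Wp_bern_bern hb0 hb1 hν.1 hν.2]
      simp [abs_nonneg]
  refine ⟨?_, htrue⟩
  rw [htrue]
  intro hEq
  have h0 : (0:ℝ) ∈ {μ : ℝ | μ ∈ Set.Icc (0:ℝ) 1 ∧ ∀ ν ∈ Set.Icc (0:ℝ) 1,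
      (∫ Y, Wp 1 (empiricalMeasure Y) (bern μ) ∂(Measure.pi fun _ : Fin 1 => bern (1/4)))
        ≤ ∫ Y, Wp 1 (empiricalMeasure Y) (bern ν) ∂(Measure.pi fun _ : Fin 1 => bern (1/4))} := by
    refine ⟨⟨le_rfl, zero_le_one⟩, fun ν hν => ?_⟩
    rw [expected_loss hb0 hb1 le_rfl zero_le_one, expected_loss hb0 hb1 hν.1 hν.2]
    nlinarith [hν.1, hν.2]
  rw [hEq] at h0
  simp only [mem_singleton_iff] at h0
  norm_num at h0
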